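/- Let ε > 0 and δ > 0 be real numbers, let m and p be real numbers with m ≥ 1 and p ≥ 2, let j and k be natural numbers with k ≥ 1, and let n_u and n_a be natural numbers with n_a ≥ 1. Define the sample-complexity bounds s_u = (1/ε) * (n_u * Real.log m + (j+1) * n_u * Real.log p + Real.log (1/δ)) and s_a = (1/ε) * (n_a * Real.log m + (j+1+k) * n_a * Real.log p + Real.log (1/δ)). If (n_u : ℝ) − (n_a : ℝ) > (k / (j+1)) * n_a, then s_u > s_a. (Theorem 1: comparison of the unabstracted and abstracted sample-complexity bounds.) -/
import Mathlib

theorem unabstracted_vs_abstracted_bounds (ε δ m p : ℝ) (hε : 0 < ε) (hδ : 0 < δ)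
    (hm : 1 ≤ m) (hp : 2 ≤ p) (j k : ℕ) (hk : 1 ≤ k) (n_u n_a : ℕ) (hna : 1 ≤ n_a)
    (s_u s_a : ℝ)
    (hsu : s_u = (1 / ε) * (n_u * Real.log m + (j + 1) * n_u * Real.log p + Real.log (1 / δ)))
    (hsa : s_a = (1 / ε) * (n_a * Real.log m + (j + 1 + k) * n_a * Real.log p + Real.log (1 / δ)))
    (h : (n_u : ℝ) - (n_a : ℝ) > ((k : ℝ) / ((j : ℝ) + 1)) * (n_a : ℝ)) :
    s_u > s_a := by
  have hj1 : (0:ℝ) < (j:ℝ) + 1 := by positivity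
  have h' : (k:ℝ) * n_a < ((j:ℝ)+1) * ((n_u:ℝ) - n_a) := by
    rw [gt_iff_lt, div_mul_eq_mul_div, div_lt_iff₀ hj1] at h
    linarith
  have hlm : 0 ≤ Real.log m := Real.log_nonneg hm
  have hlp : 0 < Real.log p := Real.log_pos (by linarith)
  have hka : (1:ℝ) ≤ (k:ℝ) * n_a := by
    have hk' : (1:ℝ) ≤ (k:ℝ) := by exact_mod_cast hk
    have hna' : (1:ℝ) ≤ (n_a:ℝ) := by exact_mod_cast hna
    nlinarith
  have hnu : (n_a:ℝ) < n_u := by nlinarith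
  rw [hsu, hsa]
  apply mul_lt_mul_of_pos_left _ (by positivity)
  have key : ((j:ℝ) + 1 + k) * n_a * Real.log p < ((j:ℝ) + 1) * n_u * Real.log p := by
    apply mul_lt_mul_of_pos_right _ hlp
    nlinarith
  nlinarith [mul_le_mul_of_nonneg_right hnu.le hlm]
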